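/- Two-grid MGRIT with Δ-correction and trivial coarse propagator Φ_c ≡ 0 is exactly Newton's method applied to the ideal coarse-grid residual equation. Precisely: assume each ψ_j is Fréchet differentiable; define the ideal coarse space-time operator A_* : (ℝ^d)^{N_c+1} → (ℝ^d)^{N_c+1} by (A_*(w))_0 = w_0 and (A_*(w))_j = w_j − ψ_j(w_{j−1}) for 1 ≤ j ≤ N_c, and set f_c = (f_0, f_m, f_{2m}, …, f_n). Then DA_*(w) is invertible for every w, and for any current coarse iterate w^k, the Δ-corrected coarse solve with Φ_c ≡ 0 — namely w^{k+1}_0 = f_0 and w^{k+1}_j = ψ_j(w^k_{j−1}) + Dψ_j(w^k_{j−1})(w^{k+1}_{j−1} − w^k_{j−1}) + f_{jm} for 1 ≤ j ≤ N_c — produces exactly the Newton iterate w^{k+1} = w^k + (DA_*(w^k))^{−1}(f_c − A_*(w^k)). -/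

import Mathlib

/-- `sweep Φ f base k w` is `w^{(k)}`, where `w^{(0)} = w` and
`w^{(k)} = Φ(w^{(k-1)}) + f (base + k)` for `k ≥ 1`. -/
def sweep {d : ℕ} (Φ : (Fin d → ℝ) → Fin d → ℝ) (f : ℕ → Fin d → ℝ) (base : ℕ) :
    ℕ → (Fin d → ℝ) → (Fin d → ℝ)
  | 0, w => w
  | (k + 1), w => Φ (sweep Φ f base k w) + f (base + (k + 1))

/-- The ideal coarse propagator across the `j`-th coarse interval:
`ψ_j(w) = Φ(w^{(m-1)})` with `w^{(0)} = w`, `w^{(k)} = Φ(w^{(k-1)}) + f_{(j-1)m+k}`. -/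
def psi {d : ℕ} (Φ : (Fin d → ℝ) → Fin d → ℝ) (f : ℕ → Fin d → ℝ) (m j : ℕ)
    (w : Fin d → ℝ) : Fin d → ℝ :=
  Φ (sweep Φ f ((j - 1) * m) (m - 1) w)

/-- The ideal coarse space-time operator `A_*` on `(ℝ^d)^{N_c+1}`:
`(A_* w)_0 = w_0` and `(A_* w)_j = w_j - ψ_j(w_{j-1})` for `1 ≤ j ≤ N_c`. -/
def Astar {d Nc : ℕ} (ψ : ℕ → (Fin d → ℝ) → Fin d → ℝ) (w : Fin (Nc + 1) → Fin d → ℝ) :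
    Fin (Nc + 1) → Fin d → ℝ :=
  fun j =>
    if _ : j.val = 0 then w j
    else w j - ψ j.val (w ⟨j.val - 1, lt_of_le_of_lt (Nat.sub_le _ _) j.isLt⟩)

/-- Two-grid MGRIT with Δ-correction and trivial coarse propagator `Φ_c ≡ 0` is exactly
Newton's method on the ideal coarse residual equation: `DA_*(w)` is invertible for every
`w`, and the Δ-corrected coarse solve with `Φ_c ≡ 0` produces exactly the Newton iterate
`w^{k+1} = w^k + (DA_*(w^k))⁻¹ (f_c - A_*(w^k))`. -/
theorem stmt6 {d n m Nc : ℕ} (hd : 1 ≤ d) (hn : 1 ≤ n) (hm : 1 ≤ m) (hdvd : m ∣ n)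
    (hNc : Nc = n / m)
    (Φ : (Fin d → ℝ) → Fin d → ℝ) (f : ℕ → Fin d → ℝ)
    (hdiff : ∀ j, 1 ≤ j → j ≤ Nc → Differentiable ℝ (psi Φ f m j))
    (wk wk1 : Fin (Nc + 1) → Fin d → ℝ)
    -- the Δ-corrected coarse solve with Φ_c ≡ 0
    (h0 : wk1 ⟨0, Nat.succ_pos Nc⟩ = f 0)
    (hrec : ∀ (j : ℕ) (h1 : 1 ≤ j) (h2 : j ≤ Nc),
      wk1 ⟨j, Nat.lt_succ_of_le h2⟩ =
        psi Φ f m j (wk ⟨j - 1, by omega⟩)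
          + fderiv ℝ (psi Φ f m j) (wk ⟨j - 1, by omega⟩)
              (wk1 ⟨j - 1, by omega⟩ - wk ⟨j - 1, by omega⟩)
          + f (j * m)) :
    (∀ w : Fin (Nc + 1) → Fin d → ℝ,
      ∃ E : (Fin (Nc + 1) → Fin d → ℝ) ≃L[ℝ] (Fin (Nc + 1) → Fin d → ℝ),
        HasFDerivAt (Astar (psi Φ f m)) E.toContinuousLinearMap w) ∧
    (∀ E : (Fin (Nc + 1) → Fin d → ℝ) ≃L[ℝ] (Fin (Nc + 1) → Fin d → ℝ),
      HasFDerivAt (Astar (psi Φ f m)) E.toContinuousLinearMap wk →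
      wk1 = wk + E.symm ((fun j : Fin (Nc + 1) => f (j.val * m)) - Astar (psi Φ f m) wk)) := by
  classical
  set ψ := psi Φ f m with hψdef
  have hprev : ∀ j : Fin (Nc + 1), j.val - 1 < Nc + 1 :=
    fun j => lt_of_le_of_lt (Nat.sub_le _ _) j.isLt
  -- the explicit derivative of Astar at w
  set D : (Fin (Nc + 1) → Fin d → ℝ) →
      ((Fin (Nc + 1) → Fin d → ℝ) →L[ℝ] (Fin (Nc + 1) → Fin d → ℝ)) :=
    fun w => ContinuousLinearMap.pi fun j =>
      if j.val = 0 then (ContinuousLinearMap.proj j : (Fin (Nc + 1) → Fin d → ℝ) →L[ℝ] (Fin d → ℝ))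
      else (ContinuousLinearMap.proj j : (Fin (Nc + 1) → Fin d → ℝ) →L[ℝ] (Fin d → ℝ)) -
        (fderiv ℝ (ψ j.val) (w ⟨j.val - 1, hprev j⟩)).comp
          (ContinuousLinearMap.proj (⟨j.val - 1, hprev j⟩ : Fin (Nc + 1))) with hDdef
  have hD : ∀ w, HasFDerivAt (Astar ψ) (D w) w := by
    intro w
    rw [hasFDerivAt_pi']
    intro i
    rw [hDdef]
    simp only [ContinuousLinearMap.proj_pi]
    by_cases h : i.val = 0
    · simp only [h, if_true]
      have : (fun w' : Fin (Nc + 1) → Fin d → ℝ => Astar ψ w' i) = fun w' => w' i := by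
        funext w'; simp [Astar, h]
      rw [this]
      exact ((ContinuousLinearMap.proj i : (Fin (Nc + 1) → Fin d → ℝ) →L[ℝ] (Fin d → ℝ))).hasFDerivAt
    · simp only [h, if_false]
      have heq : (fun w' : Fin (Nc + 1) → Fin d → ℝ => Astar ψ w' i)
          = fun w' => w' i - ψ i.val (w' ⟨i.val - 1, hprev i⟩) := by
        funext w'; simp [Astar, h]
      rw [heq]
      have h1 : 1 ≤ i.val := Nat.one_le_iff_ne_zero.mpr h
      have h2 : i.val ≤ Nc := Nat.lt_succ_iff.mp i.isLt
      have hψd : HasFDerivAt (ψ i.val)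
          (fderiv ℝ (ψ i.val) (w ⟨i.val - 1, hprev i⟩)) (w ⟨i.val - 1, hprev i⟩) :=
        ((hdiff i.val h1 h2) _).hasFDerivAt
      exact ((ContinuousLinearMap.proj i : (Fin (Nc + 1) → Fin d → ℝ) →L[ℝ] (Fin d → ℝ))).hasFDerivAt.sub
        (HasFDerivAt.comp (g := ψ i.val) w hψd ((ContinuousLinearMap.proj (⟨i.val - 1, hprev i⟩ : Fin (Nc + 1)) :
          (Fin (Nc + 1) → Fin d → ℝ) →L[ℝ] (Fin d → ℝ))).hasFDerivAt)
  -- bijectivity of D w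
  have hbij : ∀ w, Function.Bijective (D w) := by
    intro w
    have hinj : Function.Injective (D w) := by
      rw [injective_iff_map_eq_zero]
      intro u hu
      have key : ∀ k : ℕ, ∀ j : Fin (Nc + 1), j.val = k → u j = 0 := by
        intro k
        induction k with
        | zero =>
          intro j hj
          have := congrFun hu j
          rw [hDdef] at this
          simpa [ContinuousLinearMap.pi_apply, hj, (Fin.ext (by simp [hj]) : j = 0)] using this
        | succ k ih =>
          intro j hj
          have := congrFun hu j
          rw [hDdef] at this
          have hjne : ¬ j.val = 0 := by omega
          simp only [ContinuousLinearMap.pi_apply, hjne, if_false, Pi.zero_apply,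
            ContinuousLinearMap.sub_apply, ContinuousLinearMap.comp_apply,
            ContinuousLinearMap.proj_apply] at this
          have hp : u ⟨j.val - 1, hprev j⟩ = 0 := ih _ (by simp [hj])
          rw [hp, map_zero, sub_zero] at this
          exact this
      funext j; exact key j.val j rfl
    exact ⟨hinj, (LinearMap.injective_iff_surjective (f := ((D w) :
      (Fin (Nc + 1) → Fin d → ℝ) →ₗ[ℝ] (Fin (Nc + 1) → Fin d → ℝ)))).mp hinj⟩
  refine ⟨?_, ?_⟩
  · intro w
    refine ⟨(LinearEquiv.ofBijective ((D w) : (Fin (Nc + 1) → Fin d → ℝ) →ₗ[ℝ]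
        (Fin (Nc + 1) → Fin d → ℝ)) (hbij w)).toContinuousLinearEquiv, ?_⟩
    have : ((LinearEquiv.ofBijective ((D w) : (Fin (Nc + 1) → Fin d → ℝ) →ₗ[ℝ]
        (Fin (Nc + 1) → Fin d → ℝ)) (hbij w)).toContinuousLinearEquiv).toContinuousLinearMap
        = D w := by
      ext u : 1; rfl
    rw [this]; exact hD w
  · intro E hE
    have hEq : (E.toContinuousLinearMap) = D wk := hE.unique (hD wk)
    have key : E.toContinuousLinearMap (wk1 - wk)
        = (fun j : Fin (Nc + 1) => f (j.val * m)) - Astar ψ wk := by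
      rw [hEq, hDdef]
      funext j
      by_cases h : j.val = 0
      · have h0' : ∀ x : Fin (Nc + 1), x.val = 0 → wk1 x = f 0 := by
          intro x hx
          have : x = ⟨0, Nat.succ_pos Nc⟩ := Fin.ext hx
          rw [this, h0]
        have hj0 : j = ⟨0, Nat.succ_pos Nc⟩ := Fin.ext h
        simp only [ContinuousLinearMap.pi_apply, h, if_true,
          ContinuousLinearMap.proj_apply, Pi.sub_apply, Astar]
        subst hj0
        simp only [Nat.zero_mul, dif_pos, Fin.mk_zero]
        rw [h0' 0 (Fin.val_zero _)]
      · have h1 : 1 ≤ j.val := Nat.one_le_iff_ne_zero.mpr h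
        have h2 : j.val ≤ Nc := Nat.lt_succ_iff.mp j.isLt
        have hj : j = ⟨j.val, Nat.lt_succ_of_le h2⟩ := Fin.ext rfl
        simp only [ContinuousLinearMap.pi_apply, h, if_false,
          ContinuousLinearMap.sub_apply, ContinuousLinearMap.comp_apply,
          ContinuousLinearMap.proj_apply, Pi.sub_apply, Astar, dif_neg h]
        have := hrec j.val h1 h2
        rw [hj] at *
        rw [this]
        abel_nf
        simp only [neg_smul, one_smul, neg_add_rev, neg_neg]
        rw [add_left_comm]
        exact congrArg _ (add_comm _ _)
    have : E.symm ((fun j : Fin (Nc + 1) => f (j.val * m)) - Astar ψ wk) = wk1 - wk := by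
      rw [← key]
      exact E.symm_apply_apply _
    rw [this]
    abel
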